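/- For y sufficiently large, the real polynomial g_y(x) = x(ay+b)^m + ∏_{i=1}^n (x − c_i^m), where a, b, c₁ < c₂ < ··· < c_n are fixed positive integers and m > 1, has exactly one real root if n is odd and exactly two real roots if n is even, and its discriminant (in x) is O(y^{mn}). -/

import Mathlib

open Polynomial Finset
set_option maxHeartbeats 1000000

lemma aux_eval_bound {K : Type*} [NormedField K] (p : K[X]) (d : ℕ) (hd : p.natDegree ≤ d)
    (x : K) :
    ‖p.eval x‖ ≤ (∑ i ∈ Finset.range (d+1), ‖p.coeff i‖) * max 1 ‖x‖ ^ d := by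
  rw [eval_eq_sum_range' (lt_of_le_of_lt hd (Nat.lt_succ_self d)) x]
  refine (norm_sum_le _ _).trans ?_
  rw [Finset.sum_mul]
  refine Finset.sum_le_sum fun i hi => ?_
  rw [norm_mul, norm_pow]
  have h1 : (1:ℝ) ≤ max 1 ‖x‖ := le_max_left _ _
  have h2 : ‖x‖ ^ i ≤ max 1 ‖x‖ ^ d :=
    (pow_le_pow_left₀ (norm_nonneg _) (le_max_right _ _) i).trans
      (pow_le_pow_right₀ h1 (by simp at hi; omega))
  exact mul_le_mul_of_nonneg_left h2 (norm_nonneg _)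

lemma aux_eval_bound_C (p : ℝ[X]) (d : ℕ) (hd : p.natDegree ≤ d) (z : ℂ) :
    ‖(p.map (algebraMap ℝ ℂ)).eval z‖ ≤
      (∑ i ∈ Finset.range (d+1), |p.coeff i|) * max 1 ‖z‖ ^ d := by
  have := aux_eval_bound (p.map (algebraMap ℝ ℂ)) d
    (le_trans natDegree_map_le hd) z
  refine this.trans (le_of_eq ?_)
  congr 1
  refine Finset.sum_congr rfl fun i _ => ?_
  rw [coeff_map]
  simp [Real.norm_eq_abs]

lemma aux_exists_fn {α : Type*} (n : ℕ) (s : Multiset α) (h : Multiset.card s = n) :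
    ∃ r : Fin n → α, s = Multiset.map r Finset.univ.val := by
  have h' : s.toList.length = n := by rw [Multiset.length_toList, h]
  subst h'
  refine ⟨s.toList.get, ?_⟩
  have : Multiset.map s.toList.get Finset.univ.val = ↑(List.ofFn s.toList.get) := by
    rw [Fin.univ_def]
    rw [List.ofFn_eq_map]
    rfl
  rw [this, List.ofFn_get, Multiset.coe_toList]
open Polynomial Finset

lemma aux_coeff_prod_nonneg {ι : Type*} (s : Finset ι) (f : ι → Polynomial ℝ)
    (hf : ∀ i ∈ s, ∀ k, 0 ≤ (f i).coeff k) : ∀ k, 0 ≤ (∏ i ∈ s, f i).coeff k := by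
  classical
  induction s using Finset.induction_on with
  | empty => intro k; simp [coeff_one]; split <;> norm_num
  | @insert a s' hx ih =>
    intro k
    rw [Finset.prod_insert hx, coeff_mul]
    refine Finset.sum_nonneg fun p _ => mul_nonneg (hf a (Finset.mem_insert_self _ _) _)
      (ih (fun i hi k => hf i (Finset.mem_insert_of_mem hi) k) _)

lemma aux_coeff_deriv_nonneg (p : Polynomial ℝ) (h : ∀ k, 0 ≤ p.coeff k) :
    ∀ k, 0 ≤ (derivative p).coeff k := by
  intro k
  rw [coeff_derivative]
  exact mul_nonneg (h _) (by positivity)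

lemma aux_eval_ge (p : Polynomial ℝ) (h : ∀ k, 0 ≤ p.coeff k) (t : ℝ) (ht : 0 ≤ t)
    (j : ℕ) (hj : j < p.natDegree + 1) : p.coeff j * t ^ j ≤ p.eval t := by
  rw [eval_eq_sum_range' (Nat.lt_succ_self _) t]
  exact Finset.single_le_sum (fun i _ => mul_nonneg (h i) (pow_nonneg ht i))
    (Finset.mem_range.mpr hj)

lemma aux_convex_zeros {f : ℝ → ℝ} (hf : StrictConvexOn ℝ (Set.Ici 0) f) {u v w : ℝ}
    (hu : 0 ≤ u) (huv : u < v) (hvw : v < w) (h1 : f u = 0) (h2 : f v = 0) (h3 : f w = 0) :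
    False := by
  have hwu : 0 < w - u := by linarith
  have ha : 0 < (w - v) / (w - u) := div_pos (by linarith) hwu
  have hb : 0 < (v - u) / (w - u) := div_pos (by linarith) hwu
  have hab : (w - v) / (w - u) + (v - u) / (w - u) = 1 := by field_simp; ring
  have := hf.2 (Set.mem_Ici.mpr hu) (Set.mem_Ici.mpr (by linarith : (0:ℝ) ≤ w))
    (by intro h; rw [h] at huv; linarith) ha hb hab
  have hv : ((w - v) / (w - u)) • u + ((v - u) / (w - u)) • w = v := by
    rw [smul_eq_mul, smul_eq_mul]; field_simp; ring
  rw [hv, h1, h2, h3, smul_eq_mul, smul_eq_mul, mul_zero, mul_zero, add_zero] at this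
  exact lt_irrefl _ this

lemma aux_root_bound (p : Polynomial ℝ) {d : ℕ} (hd : p.natDegree = d) (hd1 : 1 ≤ d) {z : ℂ}
    (hz : Polynomial.eval z (p.map (algebraMap ℝ ℂ)) = 0) :
    ‖z‖ ≤ max 1 ((∑ i ∈ Finset.range d, |p.coeff i|) / |p.leadingCoeff|) := by
  by_cases h1 : ‖z‖ ≤ 1
  · exact h1.trans (le_max_left _ _)
  push_neg at h1
  refine le_trans ?_ (le_max_right _ _)
  have hp0 : p ≠ 0 := fun h => by simp [h] at hd; omega
  have hlc : p.leadingCoeff ≠ 0 := leadingCoeff_ne_zero.mpr hp0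
  have hlcpos : 0 < |p.leadingCoeff| := abs_pos.mpr hlc
  rw [le_div_iff₀ hlcpos]
  have hsplit : p.eraseLead + C p.leadingCoeff * X ^ d = p := by
    rw [← hd]; exact p.eraseLead_add_C_mul_X_pow
  have he : (p.eraseLead).natDegree ≤ d - 1 := by
    have := p.eraseLead_natDegree_le
    omega
  have hev : Polynomial.eval z (p.eraseLead.map (algebraMap ℝ ℂ))
      + (p.leadingCoeff : ℂ) * z ^ d = 0 := by
    have h0 := congrArg (fun q => Polynomial.eval z (Polynomial.map (algebraMap ℝ ℂ) q)) hsplit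
    simp only [Polynomial.map_add, Polynomial.map_mul, Polynomial.map_pow, Polynomial.map_C,
      Polynomial.map_X, eval_add, eval_mul, eval_pow, eval_C, eval_X] at h0
    rw [hz] at h0
    simpa using h0
  have hnorm : |p.leadingCoeff| * ‖z‖ ^ d
      = ‖Polynomial.eval z (p.eraseLead.map (algebraMap ℝ ℂ))‖ := by
    have h2 : (p.leadingCoeff : ℂ) * z ^ d
        = - Polynomial.eval z (p.eraseLead.map (algebraMap ℝ ℂ)) := by
      linear_combination hev
    calc |p.leadingCoeff| * ‖z‖ ^ d = ‖(p.leadingCoeff : ℂ) * z ^ d‖ := by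
          rw [norm_mul, norm_pow, Complex.norm_real, Real.norm_eq_abs]
      _ = _ := by rw [h2, norm_neg]
  have hb := aux_eval_bound_C p.eraseLead (d-1) he z
  rw [max_eq_right h1.le] at hb
  have hco : (∑ i ∈ Finset.range (d-1+1), |p.eraseLead.coeff i|)
      = ∑ i ∈ Finset.range d, |p.coeff i| := by
    have hdd : d - 1 + 1 = d := by omega
    rw [hdd]
    refine Finset.sum_congr rfl fun i hi => ?_
    rw [Finset.mem_range] at hi
    rw [p.eraseLead_coeff_of_ne i (by omega)]
  rw [hco] at hb
  set S := ∑ i ∈ Finset.range d, |p.coeff i| with hS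
  have hzpos : (0:ℝ) < ‖z‖ ^ (d-1) := by positivity
  have key : (‖z‖ * |p.leadingCoeff|) * ‖z‖ ^ (d-1) ≤ S * ‖z‖ ^ (d-1) := by
    have hzpow : ‖z‖ ^ d = ‖z‖ ^ (d-1) * ‖z‖ := by
      rw [← pow_succ]; congr 1; omega
    calc (‖z‖ * |p.leadingCoeff|) * ‖z‖ ^ (d-1) = |p.leadingCoeff| * ‖z‖ ^ d := by
          rw [hzpow]; ring
      _ ≤ S * ‖z‖ ^ (d-1) := by rw [hnorm]; exact hb
  exact le_of_mul_le_mul_right key hzpos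


theorem stmt_18 (m n : ℕ) (hm : 1 < m) (hn : 1 < n)
    (a b : ℤ) (ha : 0 < a) (hb : 0 < b)
    (c : Fin n → ℤ) (hc : ∀ i, 0 < c i) (hmono : StrictMono c) :
    ∃ (C : ℝ) (y₀ : ℕ), ∀ y : ℕ, y₀ ≤ y →
      let g : Polynomial ℝ :=
        Polynomial.X * Polynomial.C (((a * y + b : ℤ) : ℝ) ^ m) +
          ∏ i, (Polynomial.X - Polynomial.C ((c i : ℝ) ^ m))
      Squarefree g ∧
      (Multiset.card g.roots = if Odd n then 1 else 2) ∧
      ∃ r : Fin n → ℂ,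
        (g.map (algebraMap ℝ ℂ)).roots = Multiset.map r Finset.univ.val ∧
        ‖(g.leadingCoeff : ℂ) ^ (2 * n - 2) *
            ∏ p ∈ (Finset.univ : Finset (Fin n)).offDiag, (r p.1 - r p.2)‖
          ≤ C * (y : ℝ) ^ (m * n) := by
  classical
  obtain ⟨N, rfl⟩ : ∃ N, n = N + 2 := ⟨n - 2, by omega⟩
  set P : Polynomial ℝ := ∏ i, (X - C ((c i : ℝ) ^ m)) with hPdef
  set Q : Polynomial ℝ := ∏ i, (X + C ((c i : ℝ) ^ m)) with hQdef
  set DP : Polynomial ℝ := derivative P with hDPdef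
  set QQ : Polynomial ℝ := X * DP - P with hQQdef
  -- basic degree facts
  have hcR : ∀ i, (1:ℝ) ≤ (c i : ℝ) ^ m := by
    intro i
    have : (1:ℤ) ≤ c i := hc i
    have h1 : (1:ℝ) ≤ (c i : ℝ) := by exact_mod_cast this
    calc (1:ℝ) = 1 ^ m := (one_pow m).symm
    _ ≤ (c i : ℝ) ^ m := by gcongr
  have hPm : P.Monic := monic_prod_of_monic _ _ fun i _ => monic_X_sub_C _
  have hPdeg : P.natDegree = N + 2 := by
    rw [hPdef, natDegree_prod _ _ fun i _ => X_sub_C_ne_zero _]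
    rw [Finset.sum_congr rfl fun (i : Fin (N+2)) _ => natDegree_X_sub_C ((c i : ℝ) ^ m)]
    simp
  have hQmono : ∀ i : Fin (N+2), (X + C ((c i : ℝ) ^ m)).Monic := fun i => monic_X_add_C _
  have hQm : Q.Monic := monic_prod_of_monic _ _ fun i _ => hQmono i
  have hQdeg : Q.natDegree = N + 2 := by
    rw [hQdef, natDegree_prod _ _ fun i _ => (hQmono i).ne_zero]
    rw [Finset.sum_congr rfl fun (i : Fin (N+2)) _ => natDegree_X_add_C ((c i : ℝ) ^ m)]
    simp
  have hDPco : DP.coeff (N+1) = (N+2 : ℝ) := by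
    rw [hDPdef, coeff_derivative]
    have : P.coeff (N+1+1) = 1 := by
      have := hPm
      rw [Monic, leadingCoeff, hPdeg] at this
      exact this
    rw [this]
    push_cast
    ring
  have hDPdeg : DP.natDegree = N + 1 := by
    refine le_antisymm ?_ ?_
    · have := natDegree_derivative_le P
      rw [hPdeg] at this
      exact this.trans (by omega)
    · exact le_natDegree_of_ne_zero (by rw [hDPco]; positivity)
  have hDP0 : DP ≠ 0 := by
    intro h
    rw [h, coeff_zero] at hDPco
    have h2 : (0:ℝ) < (N:ℝ) + 2 := by positivity
    rw [← hDPco] at h2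
    exact lt_irrefl _ h2
  have hQQco : QQ.coeff (N+2) = (N+1 : ℝ) := by
    rw [hQQdef, coeff_sub, coeff_X_mul, hDPco]
    have : P.coeff (N+2) = 1 := by
      have := hPm
      rw [Monic, leadingCoeff, hPdeg] at this
      exact this
    rw [this]
    push_cast
    ring
  have hQQdeg : QQ.natDegree = N + 2 := by
    refine le_antisymm ?_ (le_natDegree_of_ne_zero (by rw [hQQco]; positivity))
    refine (natDegree_sub_le _ _).trans ?_
    simp only [max_le_iff]
    constructor
    · refine (natDegree_mul_le).trans ?_
      rw [natDegree_X, hDPdeg]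
      omega
    · rw [hPdeg]
  have hQQlc : QQ.leadingCoeff = (N+1 : ℝ) := by
    rw [leadingCoeff, hQQdeg, hQQco]
  -- constants
  set S0 : ℝ := ∑ i ∈ Finset.range (N+3), |P.coeff i| with hS0
  set SW : ℝ := ∑ i ∈ Finset.range (N+2), |P.eraseLead.coeff i| with hSW
  set SDP : ℝ := ∑ i ∈ Finset.range (N+2), |DP.coeff i| with hSDP
  set SV : ℝ := ∑ i ∈ Finset.range (N+1), |DP.eraseLead.coeff i| with hSV
  set AQ : ℝ := max 1 ((∑ i ∈ Finset.range (N+2), |QQ.coeff i|) / |QQ.leadingCoeff|) with hAQ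
  set Mder : ℝ := SDP * AQ ^ (N+1) with hMder
  set A1 : ℝ := max 1 SV with hA1
  set M1 : ℝ := SDP * A1 ^ (N+1) with hM1
  set cmax : ℝ := ((c (Fin.last (N+1)) : ℝ)) ^ m with hcmax
  set M2 : ℝ := S0 * (max 1 cmax) ^ (N+2) with hM2
  set Q1 : ℝ := Q.eval 1 with hQ1
  have hS0nn : 0 ≤ S0 := Finset.sum_nonneg fun i _ => abs_nonneg _
  have hSWnn : 0 ≤ SW := Finset.sum_nonneg fun i _ => abs_nonneg _
  have hSDPnn : 0 ≤ SDP := Finset.sum_nonneg fun i _ => abs_nonneg _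
  have hSVnn : 0 ≤ SV := Finset.sum_nonneg fun i _ => abs_nonneg _
  have hAQ1 : 1 ≤ AQ := le_max_left _ _
  have hMdernn : 0 ≤ Mder := mul_nonneg hSDPnn (pow_nonneg (by linarith) _)
  have hM1nn : 0 ≤ M1 := mul_nonneg hSDPnn (pow_nonneg (le_trans zero_le_one (le_max_left _ _)) _)
  have hM2nn : 0 ≤ M2 := mul_nonneg hS0nn (pow_nonneg (le_trans zero_le_one (le_max_left _ _)) _)
  have hQ1nn : 0 ≤ Q1 := by
    rw [hQ1, hQdef, eval_prod]
    refine Finset.prod_nonneg fun i _ => ?_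
    simp only [eval_add, eval_X, eval_C]
    have := hcR i
    linarith
  set K0 : ℝ := Mder + M1 + M2 + Q1 + (2*SW+1) ^ (N+1) + 2 with hK0
  have hpow1 : (1:ℝ) ≤ (2*SW+1) ^ (N+1) := one_le_pow₀ (by linarith)
  refine ⟨(2 ^ (N+1) * 3 * ((a:ℝ) + b) ^ m) ^ (N+2), max 1 ⌈K0⌉₊, ?_⟩
  intro y hy
  intro g
  have hgdef : g = X * C (((a * y + b : ℤ) : ℝ) ^ m) + P := rfl
  set K : ℝ := ((a * y + b : ℤ) : ℝ) ^ m with hKdef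
  have hyy : ((max 1 ⌈K0⌉₊ : ℕ) : ℝ) ≤ (y:ℝ) := Nat.cast_le.mpr hy
  have hy1 : (1:ℝ) ≤ (y:ℝ) := le_trans (by exact_mod_cast Nat.le_max_left 1 ⌈K0⌉₊) hyy
  have hyK0 : K0 ≤ (y:ℝ) := by
    refine le_trans (Nat.le_ceil K0) (le_trans ?_ hyy)
    exact_mod_cast Nat.le_max_right 1 ⌈K0⌉₊
  have hbase : (y:ℝ) + 1 ≤ ((a * y + b : ℤ) : ℝ) := by
    push_cast
    have ha1 : (1:ℝ) ≤ (a:ℝ) := by exact_mod_cast ha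
    have hb1 : (1:ℝ) ≤ (b:ℝ) := by exact_mod_cast hb
    have hy0 : (0:ℝ) ≤ (y:ℝ) := by positivity
    have h2 : 1 * (y:ℝ) ≤ (a:ℝ) * y := mul_le_mul_of_nonneg_right ha1 hy0
    linarith
  have hbase1 : (1:ℝ) ≤ ((a * y + b : ℤ) : ℝ) := by linarith
  have hK1 : (y:ℝ) + 1 ≤ K := by
    calc (y:ℝ) + 1 ≤ ((a * y + b : ℤ) : ℝ) := hbase
    _ ≤ K := le_self_pow₀ hbase1 (by omega)
  have hKK0 : K0 + 1 ≤ K := by linarith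
  have hKpos : (0:ℝ) < K := by linarith [hMdernn, hM1nn, hM2nn, hQ1nn, hpow1]
  have hKone : (1:ℝ) ≤ K := by linarith [hMdernn, hM1nn, hM2nn, hQ1nn, hpow1]
  have hKup : K ≤ ((a:ℝ) + b) ^ m * (y:ℝ) ^ m := by
    rw [hKdef, ← mul_pow]
    refine pow_le_pow_left₀ (by linarith) ?_ m
    push_cast
    have hb1 : (1:ℝ) ≤ (b:ℝ) := by exact_mod_cast hb
    have ha0 : (0:ℝ) ≤ (a:ℝ) := by exact_mod_cast ha.le
    have hb0 : (0:ℝ) ≤ (b:ℝ) := by linarith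
    have h2 : (b:ℝ) * 1 ≤ (b:ℝ) * y := mul_le_mul_of_nonneg_left hy1 hb0
    have h3 : ((a:ℝ) + b) * y = (a:ℝ) * y + (b:ℝ) * y := by ring
    rw [h3]
    linarith
  -- basic facts about g
  have hXCK : (X * C K : Polynomial ℝ).natDegree ≤ 1 := by
    refine natDegree_mul_le.trans ?_
    simp
  have hgdeg : g.natDegree = N + 2 := by
    rw [hgdef, natDegree_add_eq_right_of_natDegree_lt (by rw [hPdeg]; omega : (X * C K : Polynomial ℝ).natDegree < P.natDegree), hPdeg]
  have hgm : g.Monic := by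
    rw [Monic, leadingCoeff, hgdeg, hgdef, coeff_add, coeff_X_mul, coeff_C]
    have : P.coeff (N+2) = 1 := by
      have := hPm
      rw [Monic, leadingCoeff, hPdeg] at this
      exact this
    rw [this]
    norm_num
  have hg0 : g ≠ 0 := hgm.ne_zero
  have hDg : derivative g = C K + DP := by
    rw [hgdef, derivative_add, derivative_mul, derivative_X, derivative_C, ← hDPdef]
    ring
  set gc : Polynomial ℂ := g.map (algebraMap ℝ ℂ) with hgc
  have hgcm : gc.Monic := hgm.map _
  have hgc0 : gc ≠ 0 := hgcm.ne_zero
  have hgcdeg : gc.natDegree = N + 2 := by rw [hgc, hgm.natDegree_map, hgdeg]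
  have hgcdef : gc = X * C ((K:ℂ)) + P.map (algebraMap ℝ ℂ) := by
    rw [hgc, hgdef]
    simp [Polynomial.map_add, Polynomial.map_mul]
  have hdgc : derivative gc = C ((K:ℂ)) + DP.map (algebraMap ℝ ℂ) := by
    rw [hgc, derivative_map, hDg]
    simp [Polynomial.map_add]
  have hsep : g.Separable := by
    rw [← Polynomial.separable_map (algebraMap ℝ ℂ), Polynomial.separable_def, ← hgc]
    by_contra hcop
    have hgcd : ¬ IsUnit (EuclideanDomain.gcd gc (derivative gc)) :=
      fun h => hcop (EuclideanDomain.gcd_isUnit_iff.mp h)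
    have hd1 : EuclideanDomain.gcd gc (derivative gc) ≠ 0 := by
      intro h
      rw [EuclideanDomain.gcd_eq_zero_iff] at h
      exact hgc0 h.1
    have hdeg : (EuclideanDomain.gcd gc (derivative gc)).degree ≠ 0 := by
      intro h
      exact hgcd (Polynomial.isUnit_iff_degree_eq_zero.mpr h)
    obtain ⟨z, hz⟩ := IsAlgClosed.exists_root _ hdeg
    have hz1 : Polynomial.eval z gc = 0 := by
      obtain ⟨e, he⟩ := EuclideanDomain.gcd_dvd_left gc (derivative gc)
      rw [he, eval_mul, hz.eq_zero, zero_mul]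
    have hz2 : Polynomial.eval z (derivative gc) = 0 := by
      obtain ⟨e, he⟩ := EuclideanDomain.gcd_dvd_right gc (derivative gc)
      rw [he, eval_mul, hz.eq_zero, zero_mul]
    rw [hdgc, eval_add, eval_C] at hz2
    rw [hgcdef, eval_add, eval_mul, eval_X, eval_C] at hz1
    have hzQQ : Polynomial.eval z (QQ.map (algebraMap ℝ ℂ)) = 0 := by
      rw [hQQdef]
      simp only [Polynomial.map_sub, Polynomial.map_mul, Polynomial.map_X, eval_sub, eval_mul,
        eval_X]
      linear_combination z * hz2 - hz1
    have hzb := aux_root_bound QQ hQQdeg (by omega) hzQQ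
    rw [← hAQ] at hzb
    have hDPb := aux_eval_bound_C DP (N+1) (le_of_eq hDPdeg) z
    have hKeq : K = ‖Polynomial.eval z (DP.map (algebraMap ℝ ℂ))‖ := by
      have h5 : Polynomial.eval z (DP.map (algebraMap ℝ ℂ)) = -((K:ℂ)) := by
        linear_combination hz2
      rw [h5, norm_neg, Complex.norm_real, Real.norm_eq_abs, abs_of_pos hKpos]
    have hmaxAQ : max 1 ‖z‖ ≤ AQ := max_le hAQ1 hzb
    have hfin : K ≤ Mder := by
      rw [hKeq, hMder]
      refine hDPb.trans ?_
      rw [← hSDP]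
      have := pow_le_pow_left₀ (le_trans zero_le_one (le_max_left 1 ‖z‖)) hmaxAQ (N+1)
      exact mul_le_mul_of_nonneg_left this hSDPnn
    linarith
  have hsq : Squarefree g := PerfectField.separable_iff_squarefree.mp hsep
  have hnodup : g.roots.Nodup := nodup_roots hsep
  -- evaluation formulas
  have evP : ∀ x : ℝ, eval x P = ∏ i, (x - (c i : ℝ) ^ m) := by
    intro x
    rw [hPdef, eval_prod]
    simp
  have evQ : ∀ x : ℝ, eval x Q = ∏ i, (x + (c i : ℝ) ^ m) := by
    intro x
    rw [hQdef, eval_prod]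
    simp
  have evg : ∀ x : ℝ, eval x g = K * x + eval x P := by
    intro x
    rw [hgdef, eval_add, eval_mul, eval_X, eval_C]
    ring
  have hcle : ∀ i, (c i : ℝ) ^ m ≤ cmax := by
    intro i
    rw [hcmax]
    have h1 : (c i : ℝ) ≤ (c (Fin.last (N+1)) : ℝ) := by
      exact_mod_cast hmono.monotone (Fin.le_last i)
    have h0 : (0:ℝ) ≤ (c i : ℝ) := by
      have := hc i
      exact_mod_cast this.le
    exact pow_le_pow_left₀ h0 h1 m
  have hcmax1 : 1 ≤ cmax := le_trans (hcR (Fin.last (N+1))) (hcle (Fin.last (N+1)))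
  have hPcmax : eval cmax P = 0 := by
    rw [evP]
    refine Finset.prod_eq_zero (Finset.mem_univ (Fin.last (N+1))) ?_
    rw [← hcmax]
    ring
  have hprodneg : ∀ x : ℝ, ∏ i, (x - (c i : ℝ) ^ m) = (-1) ^ (N+2) * ∏ i, ((c i : ℝ) ^ m - x) := by
    intro x
    rw [Finset.prod_congr rfl fun (i : Fin (N+2)) _ =>
      (by ring : x - (c i : ℝ) ^ m = (-1) * ((c i : ℝ) ^ m - x))]
    rw [Finset.prod_mul_distrib, Finset.prod_const, Finset.card_univ, Fintype.card_fin]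
  have hcount : Multiset.card g.roots = if Odd (N+2) then 1 else 2 := by
    by_cases hodd : Odd (N+2)
    · rw [if_pos hodd]
      -- derivative positive everywhere
      have hDgpos : ∀ x : ℝ, 0 < eval x (derivative g) := by
        intro x
        rw [hDg, eval_add, eval_C]
        set V : Polynomial ℝ := DP.eraseLead with hV
        have hVsplit : V + C DP.leadingCoeff * X ^ (N+1) = DP := by
          rw [hV, ← hDPdeg]
          exact DP.eraseLead_add_C_mul_X_pow
        have hVdeg : V.natDegree ≤ N := by
          rw [hV]
          have h9 := DP.eraseLead_natDegree_le
          rw [hDPdeg] at h9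
          omega
        have hDPlc : DP.leadingCoeff = (N:ℝ)+2 := by
          rw [leadingCoeff, hDPdeg, hDPco]
        have hevDP : eval x DP = eval x V + ((N:ℝ)+2) * x ^ (N+1) := by
          conv_lhs => rw [← hVsplit]
          rw [eval_add, eval_mul, eval_C, eval_pow, eval_X, hDPlc]
        have heven1 : Even (N+1) := by
          rcases hodd with ⟨k, hk⟩
          exact ⟨k, by omega⟩
        have hxpow : x ^ (N+1) = |x| ^ (N+1) := (Even.pow_abs heven1 x).symm
        have hVb := aux_eval_bound V N hVdeg x
        simp only [Real.norm_eq_abs] at hVb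
        rw [← hSV] at hVb
        by_cases hxA : |x| ≤ A1
        · -- small x
          have hDPb := aux_eval_bound DP (N+1) (le_of_eq hDPdeg) x
          simp only [Real.norm_eq_abs] at hDPb
          rw [← hSDP] at hDPb
          have hmax : max 1 |x| ≤ A1 := max_le (le_max_left _ _) hxA
          have h2 : |eval x DP| ≤ M1 := by
            refine hDPb.trans ?_
            rw [hM1]
            exact mul_le_mul_of_nonneg_left
              (pow_le_pow_left₀ (le_trans zero_le_one (le_max_left _ _)) hmax _) hSDPnn
          have h3 : -M1 ≤ eval x DP := by
            have := abs_le.mp h2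
            linarith [this.1]
          have hKM1 : M1 + 1 ≤ K := by
            rw [hK0] at hKK0
            linarith [hMdernn, hM2nn, hQ1nn, hpow1]
          linarith
        · push_neg at hxA
          have hx1 : (1:ℝ) < |x| := lt_of_le_of_lt (le_max_left 1 SV) hxA
          have hmax : max 1 |x| = |x| := max_eq_right hx1.le
          rw [hmax] at hVb
          have hSVx : SV < |x| := lt_of_le_of_lt (le_max_right 1 SV) hxA
          have h3 : -(SV * |x| ^ N) ≤ eval x V := by
            have := abs_le.mp hVb
            linarith [this.1]
          have h4 : SV * |x| ^ N < ((N:ℝ)+2) * x ^ (N+1) := by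
            rw [hxpow, pow_succ]
            have hxN : (0:ℝ) < |x| ^ N := by positivity
            have e1 : SV * |x| ^ N < |x| ^ N * |x| := by
              rw [mul_comm (|x| ^ N) (|x|)]
              exact mul_lt_mul_of_pos_right hSVx hxN
            have e2 : |x| ^ N * |x| ≤ ((N:ℝ)+2) * (|x| ^ N * |x|) := by
              refine le_mul_of_one_le_left (mul_nonneg hxN.le (abs_nonneg x)) ?_
              have h12 : (0:ℝ) ≤ (N:ℝ) := Nat.cast_nonneg N
              linarith
            exact e1.trans_le e2
          linarith
      have hsm : StrictMono (fun x : ℝ => eval x g) := by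
        refine strictMono_of_deriv_pos fun x => ?_
        rw [Polynomial.deriv]
        exact hDgpos x
      have hg0neg : eval 0 g < 0 := by
        rw [evg, evP, hprodneg, Odd.neg_one_pow hodd, mul_zero, zero_add]
        have hp : (0:ℝ) < ∏ i, ((c i : ℝ) ^ m - 0) := by
          refine Finset.prod_pos fun i _ => ?_
          have := hcR i
          linarith
        nlinarith
      have hgcmaxpos : 0 < eval cmax g := by
        rw [evg, hPcmax, add_zero]
        positivity
      have hivt := intermediate_value_Icc (by linarith : (0:ℝ) ≤ cmax)
        (Polynomial.continuous g).continuousOn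
      obtain ⟨x₀, hx₀mem, hx₀⟩ := hivt ⟨hg0neg.le, hgcmaxpos.le⟩
      have hx₀' : eval x₀ g = 0 := hx₀
      rw [← Multiset.toFinset_card_of_nodup hnodup]
      have hset : g.roots.toFinset = {x₀} := by
        ext z
        simp only [Multiset.mem_toFinset, Finset.mem_singleton]
        rw [mem_roots hg0]
        constructor
        · intro hz
          refine hsm.injective ?_
          show eval z g = eval x₀ g
          rw [hz.eq_zero, hx₀']
        · intro hz
          rw [hz]
          exact hx₀'
      rw [hset, Finset.card_singleton]
    · rw [if_neg hodd]
      have heven : Even (N+2) := Nat.not_odd_iff_even.mp hodd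
      have hprodneg1 : ∀ x : ℝ, ∏ i, (x - (c i : ℝ) ^ m) = ∏ i, ((c i : ℝ) ^ m - x) := by
        intro x
        rw [hprodneg x, Even.neg_one_pow heven, one_mul]
      have hpos0 : ∀ x : ℝ, 0 ≤ x → 0 < eval x g := by
        intro x hx
        rw [evg]
        rcases lt_or_ge x ((c 0 : ℝ) ^ m) with hx1 | hx1
        · have hP : 0 < eval x P := by
            rw [evP, hprodneg1]
            refine Finset.prod_pos fun i _ => ?_
            have h2 : (c 0 : ℝ) ≤ (c i : ℝ) := by exact_mod_cast hmono.monotone (Fin.zero_le i)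
            have h0 : (0:ℝ) ≤ (c 0 : ℝ) := by exact_mod_cast (hc 0).le
            have h3 : (c 0 : ℝ) ^ m ≤ (c i : ℝ) ^ m := pow_le_pow_left₀ h0 h2 m
            linarith
          have hKx : 0 ≤ K * x := mul_nonneg hKpos.le hx
          linarith
        · rcases le_or_gt x cmax with hx2 | hx2
          · have hPb := aux_eval_bound P (N+2) (le_of_eq hPdeg) x
            simp only [Real.norm_eq_abs] at hPb
            rw [← hS0] at hPb
            have hmax : max 1 |x| ≤ max 1 cmax := by
              refine max_le (le_max_left _ _) (le_trans ?_ (le_max_right _ _))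
              rw [abs_of_nonneg hx]
              exact hx2
            have h2 : |eval x P| ≤ M2 := by
              refine hPb.trans ?_
              rw [hM2]
              exact mul_le_mul_of_nonneg_left
                (pow_le_pow_left₀ (le_trans zero_le_one (le_max_left _ _)) hmax _) hS0nn
            have h3 : K ≤ K * x := by
              have h4 : K * 1 ≤ K * x :=
                mul_le_mul_of_nonneg_left (le_trans (hcR 0) hx1) hKpos.le
              linarith [h4]
            have habs := abs_le.mp h2
            have hKM2 : M2 + 1 ≤ K := by
              rw [hK0] at hKK0
              linarith [hMdernn, hM1nn, hQ1nn, hpow1]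
            linarith [habs.1]
          · have hP : 0 < eval x P := by
              rw [evP]
              refine Finset.prod_pos fun i _ => ?_
              have := hcle i
              linarith
            have hKx : 0 ≤ K * x := mul_nonneg hKpos.le hx
            linarith
      set F : Polynomial ℝ := Q - C K * X with hF
      have hFeval : ∀ t : ℝ, eval t F = eval (-t) g := by
        intro t
        rw [hF, eval_sub, eval_mul, eval_C, eval_X, evg, evP, evQ]
        have hpr : ∏ i, (-t - (c i : ℝ) ^ m) = ∏ i, (t + (c i : ℝ) ^ m) := by
          rw [hprodneg1 (-t)]
          exact Finset.prod_congr rfl fun i _ => by ring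
        rw [hpr]
        ring
      have hdF : derivative F = derivative Q - C K := by
        rw [hF, derivative_sub, derivative_mul, derivative_C, derivative_X]
        simp
      have hd2F : derivative (derivative F) = derivative (derivative Q) := by
        rw [hdF, derivative_sub, derivative_C, sub_zero]
      have hQco : ∀ k, 0 ≤ Q.coeff k := by
        rw [hQdef]
        refine aux_coeff_prod_nonneg _ _ fun i _ k => ?_
        rw [coeff_add, coeff_X, coeff_C]
        have := hcR i
        split_ifs <;> norm_num <;> linarith
      have hQ2co := aux_coeff_deriv_nonneg _ (aux_coeff_deriv_nonneg _ hQco)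
      have hQtop : Q.coeff (N+2) = 1 := by
        have h9 := hQm
        rw [Monic, leadingCoeff, hQdeg] at h9
        exact h9
      have hQ2coN : (derivative (derivative Q)).coeff N = ((N:ℝ)+2) * ((N:ℝ)+1) := by
        rw [coeff_derivative, coeff_derivative, hQtop]
        push_cast
        ring
      have hQ2pos : ∀ t : ℝ, 0 < t → 0 < eval t (derivative (derivative Q)) := by
        intro t ht
        have hne : (derivative (derivative Q)).coeff N ≠ 0 := by
          rw [hQ2coN]
          positivity
        have hle := le_natDegree_of_ne_zero hne
        have h8 := aux_eval_ge (derivative (derivative Q)) hQ2co t ht.le N (by omega)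
        have hterm : 0 < (derivative (derivative Q)).coeff N * t ^ N := by
          rw [hQ2coN]
          positivity
        linarith
      have hconv : StrictConvexOn ℝ (Set.Ici 0) (fun t : ℝ => eval t F) := by
        refine strictConvexOn_of_deriv2_pos (convex_Ici 0)
          (Polynomial.continuous F).continuousOn ?_
        intro x hx
        rw [interior_Ici] at hx
        rw [Function.iterate_succ_apply', Function.iterate_one]
        have h1 : deriv (fun t : ℝ => eval t F) = fun t : ℝ => eval t (derivative F) :=
          funext fun t => Polynomial.deriv F
        rw [h1, Polynomial.deriv, hd2F]
        exact hQ2pos x hx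
      have hf0 : 0 < eval 0 F := by
        rw [hF, eval_sub, eval_mul, eval_C, eval_X, mul_zero, sub_zero, evQ]
        refine Finset.prod_pos fun i _ => ?_
        have := hcR i
        linarith
      have hf1 : eval 1 F < 0 := by
        rw [hF, eval_sub, eval_mul, eval_C, eval_X, mul_one]
        have h9 : Q1 + 1 ≤ K := by
          rw [hK0] at hKK0
          linarith [hMdernn, hM1nn, hM2nn, hpow1]
        rw [← hQ1]
        linarith
      have hfK : 0 < eval (K+1) F := by
        rw [hF, eval_sub, eval_mul, eval_C, eval_X, evQ]
        have h1 : (K+1) ^ (N+2) ≤ ∏ i, ((K+1) + (c i : ℝ) ^ m) := by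
          calc (K+1)^(N+2) = ∏ _i : Fin (N+2), (K+1) := by
                rw [Finset.prod_const, Finset.card_univ, Fintype.card_fin]
          _ ≤ _ := Finset.prod_le_prod (fun i _ => by linarith) (fun i _ => by linarith [hcR i])
        have h3 : (K+1)^2 ≤ (K+1)^(N+2) := pow_le_pow_right₀ (by linarith) (by omega)
        have h4 : K * (K+1) < (K+1) * (K+1) :=
          mul_lt_mul_of_pos_right (by linarith) (by linarith)
        have h5 : (K+1) * (K+1) = (K+1)^2 := by ring
        linarith
      obtain ⟨t₁, ht₁mem, ht₁⟩ := intermediate_value_Icc' (by linarith : (0:ℝ) ≤ 1)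
        (Polynomial.continuous F).continuousOn ⟨hf1.le, hf0.le⟩
      obtain ⟨t₂, ht₂mem, ht₂⟩ := intermediate_value_Icc (by linarith : (1:ℝ) ≤ K+1)
        (Polynomial.continuous F).continuousOn ⟨hf1.le, hfK.le⟩
      have ht₁' : eval t₁ F = 0 := ht₁
      have ht₂' : eval t₂ F = 0 := ht₂
      have ht₁0 : 0 < t₁ := by
        rcases (lt_or_eq_of_le ht₁mem.1) with h | h
        · exact h
        · exfalso
          rw [← h] at ht₁'
          linarith
      have ht₁1 : t₁ < 1 := by
        rcases (lt_or_eq_of_le ht₁mem.2) with h | h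
        · exact h
        · exfalso
          rw [h] at ht₁'
          linarith
      have ht₂1 : 1 < t₂ := by
        rcases (lt_or_eq_of_le ht₂mem.1) with h | h
        · exact h
        · exfalso
          rw [← h] at ht₂'
          linarith
      have ht12 : t₁ < t₂ := by linarith
      have huniq : ∀ s : ℝ, 0 ≤ s → eval s F = 0 → s = t₁ ∨ s = t₂ := by
        intro s hs hsF
        by_contra hcon
        push_neg at hcon
        obtain ⟨hs1, hs2⟩ := hcon
        rcases lt_trichotomy s t₁ with h | h | h
        · exact aux_convex_zeros hconv hs h ht12 hsF ht₁' ht₂'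
        · exact hs1 h
        · rcases lt_trichotomy s t₂ with h2 | h2 | h2
          · exact aux_convex_zeros hconv ht₁0.le h h2 ht₁' hsF ht₂'
          · exact hs2 h2
          · exact aux_convex_zeros hconv ht₁0.le ht12 h2 ht₁' ht₂' hsF
      rw [← Multiset.toFinset_card_of_nodup hnodup]
      have hset : g.roots.toFinset = {-t₁, -t₂} := by
        ext z
        simp only [Multiset.mem_toFinset, Finset.mem_insert, Finset.mem_singleton]
        rw [mem_roots hg0]
        constructor
        · intro hz
          have hz' : eval z g = 0 := hz
          have hzneg : z < 0 := by
            by_contra hzn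
            push_neg at hzn
            have h7 := hpos0 z hzn
            rw [hz'] at h7
            exact lt_irrefl _ h7
          have hsF : eval (-z) F = 0 := by
            rw [hFeval, neg_neg]
            exact hz'
          rcases huniq (-z) (by linarith) hsF with h | h
          · left; linarith
          · right; linarith
        · intro hz
          rcases hz with h | h <;> rw [h]
          · show eval (-t₁) g = 0
            rw [← hFeval t₁]
            exact ht₁'
          · show eval (-t₂) g = 0
            rw [← hFeval t₂]
            exact ht₂'
      rw [hset]
      rw [Finset.card_insert_of_notMem (by
        simp only [Finset.mem_singleton]
        intro h
        have : t₁ = t₂ := by linarith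
        linarith), Finset.card_singleton]
  refine ⟨hsq, hcount, ?_⟩
  have hsplits : gc.Splits :=
    IsAlgClosed.splits gc
  have hcard : Multiset.card gc.roots = N + 2 := by
    rw [splits_iff_card_roots.mp hsplits, hgcdeg]
  obtain ⟨r, hr⟩ := aux_exists_fn (N+2) gc.roots hcard
  refine ⟨r, hr, ?_⟩
  have hlc1 : g.leadingCoeff = 1 := hgm
  rw [hlc1]
  push_cast
  rw [one_pow, one_mul]
  rw [norm_prod]
  set R' : ℝ := (2*SW+1)^(N+1) + 2*K with hR'
  have hR'nn : 0 ≤ R' := add_nonneg (pow_nonneg (by linarith) _) (by linarith)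
  have hrb : ∀ z : ℂ, z ∈ gc.roots → ‖z‖^(N+1) ≤ R' := by
    intro z hz
    have hzr : eval z gc = 0 := (mem_roots hgc0).mp hz
    have hEsplit : P.eraseLead + C 1 * X ^ (N+2) = P := by
      have h9 := P.eraseLead_add_C_mul_X_pow
      rw [hPdeg, hPm.leadingCoeff] at h9
      exact h9
    have hEdeg : P.eraseLead.natDegree ≤ N+1 := by
      have h9 := P.eraseLead_natDegree_le
      rw [hPdeg] at h9
      omega
    have hevE : eval z (P.eraseLead.map (algebraMap ℝ ℂ)) + z^(N+2)
        = eval z (P.map (algebraMap ℝ ℂ)) := by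
      conv_rhs => rw [← hEsplit]
      simp [Polynomial.map_add, Polynomial.map_mul, Polynomial.map_pow]
    rw [hgcdef, eval_add, eval_mul, eval_X, eval_C] at hzr
    have hzn : z^(N+2) = -(z * ((K:ℝ):ℂ)) - eval z (P.eraseLead.map (algebraMap ℝ ℂ)) := by
      linear_combination hzr + hevE
    have hnorm : ‖z‖^(N+2) ≤ K * ‖z‖ + SW * max 1 ‖z‖ ^ (N+1) := by
      calc ‖z‖^(N+2) = ‖z^(N+2)‖ := (norm_pow z (N+2)).symm
      _ ≤ ‖z * ((K:ℝ):ℂ)‖ + ‖eval z (P.eraseLead.map (algebraMap ℝ ℂ))‖ := by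
          rw [hzn]
          exact (norm_sub_le _ _).trans (by rw [norm_neg])
      _ ≤ K * ‖z‖ + SW * max 1 ‖z‖ ^ (N+1) := by
          have hb := aux_eval_bound_C P.eraseLead (N+1) hEdeg z
          rw [← hSW] at hb
          rw [norm_mul, Complex.norm_real, Real.norm_eq_abs, abs_of_pos hKpos]
          exact add_le_add (le_of_eq (mul_comm _ _)) hb
    by_cases h1 : ‖z‖ ≤ 1
    · have h3 : ‖z‖^(N+1) ≤ 1 := pow_le_one₀ (norm_nonneg z) h1
      rw [hR']
      linarith [hKpos, hpow1]
    · push_neg at h1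
      rw [max_eq_right h1.le] at hnorm
      by_cases h2 : ‖z‖ ≤ 2*SW+1
      · have h3 : ‖z‖^(N+1) ≤ (2*SW+1)^(N+1) := pow_le_pow_left₀ (norm_nonneg z) h2 _
        rw [hR']
        linarith [hKpos]
      · push_neg at h2
        have hzpos : (0:ℝ) < ‖z‖ := by linarith
        have hp1 : (0:ℝ) < ‖z‖^(N+1) := by positivity
        have hkey : SW * ‖z‖^(N+1) * 2 ≤ ‖z‖^(N+2) := by
          have h4 : 2*SW ≤ ‖z‖ := by linarith
          calc SW * ‖z‖^(N+1) * 2 = (2*SW) * ‖z‖^(N+1) := by ring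
          _ ≤ ‖z‖ * ‖z‖^(N+1) := mul_le_mul_of_nonneg_right h4 hp1.le
          _ = ‖z‖^(N+2) := by rw [← pow_succ']
        have h5 : ‖z‖^(N+2) ≤ 2*(K*‖z‖) := by linarith
        have h6 : ‖z‖^(N+1) * ‖z‖ ≤ (2*K) * ‖z‖ := by
          rw [← pow_succ]
          calc ‖z‖^(N+2) ≤ 2*(K*‖z‖) := h5
          _ = (2*K)*‖z‖ := by ring
        have h7 := le_of_mul_le_mul_right h6 hzpos
        rw [hR']
        linarith [pow_nonneg (by linarith : (0:ℝ) ≤ 2*SW+1) (N+1)]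
  have hrlt : ∀ i : Fin (N+2), ‖r i‖^(N+1) ≤ R' := by
    intro i
    refine hrb (r i) ?_
    rw [hr]
    exact Multiset.mem_map_of_mem r (Finset.mem_univ i)
  have hcardoff : (Finset.univ : Finset (Fin (N+2))).offDiag.card = (N+2)*(N+1) := by
    rw [Finset.offDiag_card, Finset.card_univ, Fintype.card_fin]
    rw [show (N+2)*(N+2) = (N+2)*(N+1) + (N+2) from by ring]
    omega
  set D : ℝ := 2^(N+1) * R' with hD
  have hDnn : 0 ≤ D := mul_nonneg (by positivity) hR'nn
  have hterm : ∀ p ∈ (Finset.univ : Finset (Fin (N+2))).offDiag,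
      ‖r p.1 - r p.2‖^(N+1) ≤ D := by
    intro p _
    have h1 : ‖r p.1 - r p.2‖ ≤ ‖r p.1‖ + ‖r p.2‖ := norm_sub_le _ _
    rcases le_total ‖r p.1‖ ‖r p.2‖ with h | h
    · have h2 : ‖r p.1 - r p.2‖ ≤ 2 * ‖r p.2‖ := by linarith
      calc ‖r p.1 - r p.2‖^(N+1) ≤ (2*‖r p.2‖)^(N+1) :=
            pow_le_pow_left₀ (norm_nonneg _) h2 _
      _ = 2^(N+1) * ‖r p.2‖^(N+1) := mul_pow _ _ _
      _ ≤ D := by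
          rw [hD]
          exact mul_le_mul_of_nonneg_left (hrlt p.2) (by positivity)
    · have h2 : ‖r p.1 - r p.2‖ ≤ 2 * ‖r p.1‖ := by linarith
      calc ‖r p.1 - r p.2‖^(N+1) ≤ (2*‖r p.1‖)^(N+1) :=
            pow_le_pow_left₀ (norm_nonneg _) h2 _
      _ = 2^(N+1) * ‖r p.1‖^(N+1) := mul_pow _ _ _
      _ ≤ D := by
          rw [hD]
          exact mul_le_mul_of_nonneg_left (hrlt p.1) (by positivity)
  have hprodpow : (∏ p ∈ (Finset.univ : Finset (Fin (N+2))).offDiag, ‖r p.1 - r p.2‖)^(N+1)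
      ≤ (D^(N+2))^(N+1) := by
    rw [← Finset.prod_pow]
    calc ∏ p ∈ (Finset.univ : Finset (Fin (N+2))).offDiag, ‖r p.1 - r p.2‖^(N+1)
        ≤ ∏ _p ∈ (Finset.univ : Finset (Fin (N+2))).offDiag, D :=
          Finset.prod_le_prod (fun p _ => by positivity) hterm
    _ = D ^ ((N+2)*(N+1)) := by rw [Finset.prod_const, hcardoff]
    _ = (D^(N+2))^(N+1) := by rw [← pow_mul]
  have hprodle : ∏ p ∈ (Finset.univ : Finset (Fin (N+2))).offDiag, ‖r p.1 - r p.2‖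
      ≤ D^(N+2) :=
    le_of_pow_le_pow_left₀ (Nat.succ_ne_zero N) (pow_nonneg hDnn _) hprodpow
  have hR3K : R' ≤ 3*K := by
    rw [hR']
    have h9 : (2*SW+1)^(N+1) ≤ K := by
      rw [hK0] at hKK0
      linarith [hMdernn, hM1nn, hM2nn, hQ1nn]
    linarith
  calc ∏ p ∈ (Finset.univ : Finset (Fin (N+2))).offDiag, ‖r p.1 - r p.2‖
      ≤ D^(N+2) := hprodle
  _ ≤ (2^(N+1) * (3*K))^(N+2) := by
      refine pow_le_pow_left₀ hDnn ?_ _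
      rw [hD]
      exact mul_le_mul_of_nonneg_left hR3K (by positivity)
  _ ≤ (2^(N+1) * (3*(((a:ℝ)+b)^m * (y:ℝ)^m)))^(N+2) := by
      refine pow_le_pow_left₀ (by positivity) ?_ _
      have h9 : (3:ℝ)*K ≤ 3*(((a:ℝ)+b)^m * (y:ℝ)^m) := by linarith [hKup]
      exact mul_le_mul_of_nonneg_left h9 (by positivity)
  _ = (2^(N+1) * 3 * ((a:ℝ)+b)^m)^(N+2) * (y:ℝ)^(m*(N+2)) := by
      rw [show (2:ℝ)^(N+1) * (3*(((a:ℝ)+b)^m * (y:ℝ)^m))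
          = (2^(N+1) * 3 * ((a:ℝ)+b)^m) * (y:ℝ)^m by ring]
      rw [mul_pow, ← pow_mul]
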